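/- Suppose h : ℝⁿ → ℝ is continuously differentiable and x(t) solves ẋ = f(x) + g(x)u(t) + d(x) where ‖d(x) − d̂(t,x)‖_∞ ≤ δ(t) pointwise. If for all t the control satisfies ∇h(x(t))·(f(x(t)) + g(x(t))u(t) + d̂(t,x(t))) − δ(t)‖∇h(x(t))‖₁ ≥ −α(h(x(t))) with α locally Lipschitz, strictly increasing, α(0)=0, and h(x(0)) ≥ 0, then h(x(t)) ≥ 0 for all t ≥ 0. -/

import Mathlib

open Matrix

/-- Robust CBF safety with a time-varying estimation error bound δ(t): if the
robustified CBF inequality holds along the trajectory, then {h ≥ 0} is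
forward invariant. -/
theorem robust_cbf_safety
    (n m : ℕ) (h : (Fin n → ℝ) → ℝ) (hh : ContDiff ℝ 1 h)
    (f : (Fin n → ℝ) → (Fin n → ℝ))
    (g : (Fin n → ℝ) → Matrix (Fin n) (Fin m) ℝ)
    (d : (Fin n → ℝ) → (Fin n → ℝ))
    (dhat : ℝ → (Fin n → ℝ) → (Fin n → ℝ))
    (u : ℝ → (Fin m → ℝ)) (δ : ℝ → ℝ)
    (x : ℝ → (Fin n → ℝ))
    (hx : ∀ t, HasDerivAt x (f (x t) + (g (x t)).mulVec (u t) + d (x t)) t)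
    (hest : ∀ (t : ℝ) (y : Fin n → ℝ) (i : Fin n), |d y i - dhat t y i| ≤ δ t)
    (α : ℝ → ℝ) (hα : LocallyLipschitz α)
    (hαmono : StrictMono α) (hα0 : α 0 = 0)
    (hcbf : ∀ t : ℝ,
      fderiv ℝ h (x t) (f (x t) + (g (x t)).mulVec (u t) + dhat t (x t))
        - δ t * (∑ i : Fin n, |fderiv ℝ h (x t) (Pi.single i 1)|)
        ≥ -α (h (x t)))
    (h0 : h (x 0) ≥ 0) :
    ∀ t ≥ (0:ℝ), h (x t) ≥ 0 := by
  intro t₁ ht₁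
  by_contra hneg
  push_neg at hneg
  set v : ℝ → ℝ := fun t => h (x t) with hvdef
  have hdiff : ∀ t, HasDerivAt v
      (fderiv ℝ h (x t) (f (x t) + (g (x t)).mulVec (u t) + d (x t))) t := by
    intro t
    exact ((hh.differentiable one_ne_zero).differentiableAt.hasFDerivAt).comp_hasDerivAt t (hx t)
  have hlow : ∀ t, fderiv ℝ h (x t) (f (x t) + (g (x t)).mulVec (u t) + d (x t))
      ≥ -α (v t) := by
    intro t
    set L := fderiv ℝ h (x t) with hL
    have hsplit : f (x t) + (g (x t)).mulVec (u t) + d (x t)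
        = (f (x t) + (g (x t)).mulVec (u t) + dhat t (x t)) + (d (x t) - dhat t (x t)) := by
      abel
    rw [hsplit, map_add]
    have hdec : d (x t) - dhat t (x t)
        = ∑ i : Fin n, (d (x t) i - dhat t (x t) i) • (Pi.single i 1 : Fin n → ℝ) := by
      funext j
      simp [Finset.sum_apply, Pi.single_apply, Finset.sum_ite_eq, mul_comm]
    have habs : |L (d (x t) - dhat t (x t))| ≤ δ t * ∑ i : Fin n, |L (Pi.single i 1)| := by
      rw [hdec, map_sum]
      simp only [_root_.map_smul, smul_eq_mul]
      calc |∑ i : Fin n, (d (x t) i - dhat t (x t) i) * L (Pi.single i 1)|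
          ≤ ∑ i : Fin n, |(d (x t) i - dhat t (x t) i) * L (Pi.single i 1)| :=
            Finset.abs_sum_le_sum_abs _ _
        _ ≤ ∑ i : Fin n, δ t * |L (Pi.single i 1)| := by
            refine Finset.sum_le_sum fun i _ => ?_
            rw [abs_mul]
            exact mul_le_mul_of_nonneg_right (hest t (x t) i) (abs_nonneg _)
        _ = δ t * ∑ i : Fin n, |L (Pi.single i 1)| := by rw [Finset.mul_sum]
    have hcbf' := hcbf t
    have hnl := neg_abs_le (L (d (x t) - dhat t (x t)))
    simp only [hvdef]
    rw [ge_iff_le]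
    linarith
  -- the barrier argument
  have hvcont : Continuous v := by
    exact continuous_iff_continuousAt.2 fun t => (hdiff t).continuousAt
  set A : Set ℝ := Set.Icc 0 t₁ ∩ v ⁻¹' Set.Ici 0 with hA
  have hAne : (0:ℝ) ∈ A := ⟨⟨le_rfl, ht₁⟩, h0⟩
  have hAcompact : IsCompact A :=
    isCompact_Icc.inter_right (isClosed_Ici.preimage hvcont)
  have hs := hAcompact.sSup_mem ⟨0, hAne⟩
  set s := sSup A with hsdef
  obtain ⟨⟨hs0, hst⟩, hvs⟩ := hs
  have hslt : s < t₁ := lt_of_le_of_ne hst (by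
    intro hh'
    rw [hh'] at hvs
    exact absurd hvs (not_le.2 hneg))
  have hvneg : ∀ t ∈ Set.Ioc s t₁, v t < 0 := by
    intro t ⟨hts, htt⟩
    by_contra hc
    push_neg at hc
    have : t ∈ A := ⟨⟨le_trans hs0 hts.le, htt⟩, hc⟩
    exact absurd (le_csSup hAcompact.bddAbove this) (not_le.2 hts)
  have hmono : StrictMonoOn v (Set.Icc s t₁) := by
    apply strictMonoOn_of_deriv_pos (convex_Icc s t₁) (hvcont.continuousOn)
    intro t ht
    rw [interior_Icc] at ht
    rw [(hdiff t).deriv]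
    have hvt : v t < 0 := hvneg t ⟨ht.1, ht.2.le⟩
    have : α (v t) < 0 := by
      have := hαmono hvt
      rwa [hα0] at this
    have := hlow t
    linarith
  have hfin := hmono ⟨le_rfl, hslt.le⟩ ⟨hslt.le, le_rfl⟩ hslt
  have hvs' : (0:ℝ) ≤ v s := hvs
  have hvt₁ : v t₁ < 0 := hneg
  linarith
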